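/- arXiv:2107.11873 — 2 statements merged into one kernel-verified Lean document; each statement's English description precedes it below -/
import Mathlib

section
/- Qubit discrimination with deterministic posterior information: Fix θ ∈ (0, π/2], let a = (cos(θ/2), sin(θ/2), 0) and b = (cos(θ/2), −sin(θ/2), 0) in ℝ³, and let X = Y = {+a, −a, +b, −b}. Define the state ensemble on ℂ² by 𝓔(x) = (1/8)(𝟙 + x·σ), where x·σ = x₁σ₁ + x₂σ₂ + x₃σ₃ with σ₁, σ₂, σ₃ the Pauli matrices. Let T = {α-type, β-type}, τ(±a) = α-type, τ(±b) = β-type, the score function f_δ(x,y) = δ_{x,y}, and the partial information map α_τ(t | x) = δ_{τ(x),t}. Then the maximal average score with posterior information is E^post_{f_δ,α_τ}(𝓔) = (1/2)·(1 + √((1 + cos θ)/2)), while the maximal average score with prior information is E^prior_{f_δ,α_τ}(𝓔) = 1. -/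
open scoped BigOperators
open Matrix
open scoped ComplexOrder

noncomputable section

abbrev Mat (d : ℕ) := Matrix (Fin d) (Fin d) ℂ

def IsStateEnsemble {d : ℕ} {X : Type*} [Fintype X] (E : X → Mat d) : Prop :=
  (∀ x, (E x).PosSemidef) ∧ (∑ x, (E x).trace) = 1

def IsMeasurement {d : ℕ} {Z : Type*} [Fintype Z] (M : Z → Mat d) : Prop :=
  (∀ z, (M z).PosSemidef) ∧ (∑ z, M z) = 1

def IsScore {X Y : Type*} (f : X → Y → ℝ) : Prop :=
  ∀ x y, 0 ≤ f x y ∧ f x y ≤ 1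

def IsPartialInfo {T X : Type*} [Fintype T] (α : T → X → ℝ) : Prop :=
  (∀ t x, 0 ≤ α t x) ∧ ∀ x, (∑ t, α t x) = 1

def IsPostProc {T Y Z : Type*} [Fintype Y] (ν : T → Y → Z → ℝ) : Prop :=
  (∀ t y z, 0 ≤ ν t y z) ∧ ∀ t z, (∑ y, ν t y z) = 1

def Pg {d : ℕ} {X : Type*} [Fintype X] (E M : X → Mat d) : ℝ :=
  ∑ x, ((E x) * (M x)).trace.re

def PgMax {d : ℕ} {X : Type*} [Fintype X] (E : X → Mat d) : ℝ :=
  sSup {p : ℝ | ∃ M : X → Mat d, IsMeasurement M ∧ p = Pg E M}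

def Escore {d : ℕ} {X Y : Type*} [Fintype X] [Fintype Y]
    (f : X → Y → ℝ) (E : X → Mat d) (M : Y → Mat d) : ℝ :=
  ∑ x, ∑ y, f x y * ((E x) * (M y)).trace.re

def EMax {d : ℕ} {X Y : Type*} [Fintype X] [Fintype Y]
    (f : X → Y → ℝ) (E : X → Mat d) : ℝ :=
  sSup {p : ℝ | ∃ M : Y → Mat d, IsMeasurement M ∧ p = Escore f E M}

def Epost {d : ℕ} {X Y T Z : Type*} [Fintype X] [Fintype Y] [Fintype T] [Fintype Z]
    (f : X → Y → ℝ) (α : T → X → ℝ) (E : X → Mat d)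
    (M : Z → Mat d) (ν : T → Y → Z → ℝ) : ℝ :=
  ∑ x, ∑ y, ∑ t, ∑ z, f x y * α t x * ν t y z * ((E x) * (M z)).trace.re

def EpostMax {d : ℕ} {X Y T : Type*} [Fintype X] [Fintype Y] [Fintype T]
    (f : X → Y → ℝ) (α : T → X → ℝ) (E : X → Mat d) : ℝ :=
  sSup {p : ℝ | ∃ (n : ℕ) (M : Fin n → Mat d) (ν : T → Y → Fin n → ℝ),
    IsMeasurement M ∧ IsPostProc ν ∧ p = Epost f α E M ν}

def Eprior {d : ℕ} {X Y T : Type*} [Fintype X] [Fintype Y] [Fintype T]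
    (f : X → Y → ℝ) (α : T → X → ℝ) (E : X → Mat d) (N : T → Y → Mat d) : ℝ :=
  ∑ x, ∑ y, ∑ t, f x y * α t x * ((E x) * (N t y)).trace.re

def EpriorMax {d : ℕ} {X Y T : Type*} [Fintype X] [Fintype Y] [Fintype T]
    (f : X → Y → ℝ) (α : T → X → ℝ) (E : X → Mat d) : ℝ :=
  sSup {p : ℝ | ∃ N : T → Y → Mat d, (∀ t, IsMeasurement (N t)) ∧ p = Eprior f α E N}

def IsCompatible {d : ℕ} {T Y : Type*} [Fintype T] [Fintype Y] (N : T → Y → Mat d) : Prop :=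
  ∃ (n : ℕ) (M : Fin n → Mat d) (ν : T → Y → Fin n → ℝ),
    IsMeasurement M ∧ IsPostProc ν ∧ ∀ t y, N t y = ∑ z, ν t y z • M z

def stdPost {T Y : Type*} [DecidableEq Y] : T → Y → (T → Y) → ℝ :=
  fun t y φ => if y = φ t then 1 else 0

def Δconst {d : ℕ} {X Y : Type*} [Fintype X] [Fintype Y]
    (f : X → Y → ℝ) (E : X → Mat d) : ℝ :=
  ∑ x, ∑ y, f x y * (E x).trace.re

def auxEns {d : ℕ} {X Y : Type*} [Fintype X] [Fintype Y]
    (f : X → Y → ℝ) (E : X → Mat d) (y : Y) : Mat d :=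
  (Δconst f E)⁻¹ • ∑ x, f x y • E x

def auxEnsPost {d : ℕ} {X Y T : Type*} [Fintype X] [Fintype Y] [Fintype T]
    (f : X → Y → ℝ) (α : T → X → ℝ) (E : X → Mat d) (φ : T → Y) : Mat d :=
  ((Fintype.card Y : ℝ) ^ (Fintype.card T - 1) * Δconst f E)⁻¹ •
    ∑ x, ∑ t, (f x (φ t) * α t x) • E x

def pauli1 : Mat 2 := !![0, 1; 1, 0]
def pauli2 : Mat 2 := !![0, -Complex.I; Complex.I, 0]
def pauli3 : Mat 2 := !![1, 0; 0, -1]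

def dotPauli (v : Fin 3 → ℝ) : Mat 2 :=
  (v 0 : ℂ) • pauli1 + (v 1 : ℂ) • pauli2 + (v 2 : ℂ) • pauli3

def labelVec (θ : ℝ) : Fin 4 → Fin 3 → ℝ :=
  ![![Real.cos (θ / 2), Real.sin (θ / 2), 0],
    -![Real.cos (θ / 2), Real.sin (θ / 2), 0],
    ![Real.cos (θ / 2), -Real.sin (θ / 2), 0],
    -![Real.cos (θ / 2), -Real.sin (θ / 2), 0]]

def qubitEns (θ : ℝ) : Fin 4 → Mat 2 :=
  fun x => (8 : ℝ)⁻¹ • ((1 : Mat 2) + dotPauli (labelVec θ x))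

def fdisc : Fin 4 → Fin 4 → ℝ := fun x y => if x = y then 1 else 0

def τpart : Fin 4 → Fin 2 := ![0, 0, 1, 1]

def ατ : Fin 2 → Fin 4 → ℝ := fun t x => if τpart x = t then 1 else 0

lemma conj_mul_self' (u : ℂ) : (starRingEnd ℂ u) * u = (Complex.normSq u : ℂ) := by
  rw [mul_comm, Complex.mul_conj]

def uC (a : Fin 3 → ℝ) : ℂ := (a 0 : ℂ) + (a 1 : ℂ) * Complex.I

lemma ens_eq (a : Fin 3 → ℝ) (h : a 2 = 0) :
    (8:ℝ)⁻¹ • ((1 : Mat 2) + dotPauli a)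
      = (8:ℝ)⁻¹ • (!![1, starRingEnd ℂ (uC a); uC a, 1] : Mat 2) := by
  congr 1
  ext i j
  fin_cases i <;> fin_cases j <;>
    simp [dotPauli, pauli1, pauli2, pauli3, uC, h, Complex.ext_iff]

lemma tr_re (u : ℂ) (M : Mat 2) (h10 : M 1 0 = starRingEnd ℂ (M 0 1)) :
    (((8:ℝ)⁻¹ • (!![1, starRingEnd ℂ u; u, 1] : Mat 2)) * M).trace.re
      = (8:ℝ)⁻¹ * ((M 0 0).re + (M 1 1).re + 2 * (u * M 0 1).re) := by
  simp [Matrix.trace_fin_two, Matrix.mul_apply, Fin.sum_univ_two, h10,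
    Matrix.vecMul, dotProduct,
    Complex.add_re, Complex.mul_re, Complex.conj_re, Complex.conj_im, Matrix.smul_apply]
  ring

lemma psd2 (r : ℝ) (hr : 0 ≤ r) (u : ℂ) (hu : Complex.normSq u = 1) :
    (r • (!![1, starRingEnd ℂ u; u, 1] : Mat 2)).PosSemidef := by
  rw [Matrix.posSemidef_iff_dotProduct_mulVec]
  constructor
  · ext i j
    fin_cases i <;> fin_cases j <;>
      simp [Matrix.conjTranspose_apply, Complex.ext_iff]
  · intro x
    have h1 : ((Complex.normSq (x 0 + (starRingEnd ℂ u) * x 1) : ℝ) : ℂ)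
        = (starRingEnd ℂ (x 0 + (starRingEnd ℂ u) * x 1)) * (x 0 + (starRingEnd ℂ u) * x 1) :=
      (conj_mul_self' _).symm
    have h2 : (starRingEnd ℂ u) * u = 1 := by rw [conj_mul_self', hu]; norm_num
    have key : dotProduct (star x) ((r • (!![1, starRingEnd ℂ u; u, 1] : Mat 2)) *ᵥ x)
        = ((r * Complex.normSq (x 0 + (starRingEnd ℂ u) * x 1) : ℝ) : ℂ) := by
      push_cast
      rw [h1]
      simp [Matrix.mulVec, dotProduct, Fin.sum_univ_two, Complex.star_def]
      linear_combination (-(r:ℂ) * x 1 * (starRingEnd ℂ (x 1))) * h2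
    rw [key]
    exact Complex.zero_le_real.2 (mul_nonneg hr (Complex.normSq_nonneg _))

lemma psd_facts (M : Mat 2) (hM : M.PosSemidef) :
    0 ≤ (M 0 0).re ∧ 0 ≤ (M 1 1).re ∧ M 1 0 = starRingEnd ℂ (M 0 1) ∧
      2 * ‖M 0 1‖ ≤ (M 0 0).re + (M 1 1).re := by
  have h00 : (0:ℂ) ≤ M 0 0 := by
    have := hM.dotProduct_mulVec_nonneg ![1, 0]
    simpa [Matrix.mulVec, dotProduct, Fin.sum_univ_two] using this
  have h11 : (0:ℂ) ≤ M 1 1 := by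
    have := hM.dotProduct_mulVec_nonneg ![0, 1]
    simpa [Matrix.mulVec, dotProduct, Fin.sum_univ_two] using this
  have hh : M 1 0 = starRingEnd ℂ (M 0 1) := by
    have := congrFun (congrFun hM.1 1) 0
    simpa [Matrix.conjTranspose_apply, Complex.star_def, eq_comm] using this.symm
  refine ⟨(Complex.nonneg_iff.1 h00).1, (Complex.nonneg_iff.1 h11).1, hh, ?_⟩
  set m : ℝ := ‖M 0 1‖ with hm
  rcases eq_or_lt_of_le (norm_nonneg (M 0 1)) with h0 | h0
  · rw [hm, ← h0]
    simpa using add_nonneg (Complex.nonneg_iff.1 h00).1 (Complex.nonneg_iff.1 h11).1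
  · have key := hM.dotProduct_mulVec_nonneg ![-(M 0 1), (m:ℂ)]
    have e00 : M 0 0 = ((M 0 0).re : ℂ) := by
      have := (Complex.nonneg_iff.1 h00).2
      exact Complex.ext rfl (by simp [← this])
    have e11 : M 1 1 = ((M 1 1).re : ℂ) := by
      have := (Complex.nonneg_iff.1 h11).2
      exact Complex.ext rfl (by simp [← this])
    have habs : (starRingEnd ℂ (M 0 1)) * (M 0 1) = ((m : ℂ))^2 := by
      rw [mul_comm, Complex.mul_conj, Complex.normSq_eq_norm_sq, hm]
      push_cast
      ring
    have key2 : (0:ℂ) ≤ ((m^2 * ((M 0 0).re + (M 1 1).re) - 2 * m^3 : ℝ) : ℂ) := by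
      refine le_trans key (le_of_eq ?_)
      simp only [Matrix.mulVec, dotProduct, Fin.sum_univ_two, Pi.star_apply,
        Matrix.cons_val_zero, Matrix.cons_val_one, Matrix.head_cons, Complex.star_def,
        map_neg]
      rw [hh, e00, e11]
      simp only [Complex.conj_ofReal, Complex.ofReal_re]
      push_cast
      linear_combination (((M 0 0).re:ℂ) - 2*(m:ℂ)) * habs
    have : 0 ≤ m^2 * ((M 0 0).re + (M 1 1).re) - 2 * m^3 := Complex.zero_le_real.1 key2
    rw [← hm] at h0
    nlinarith [this, mul_pos h0 h0]

lemma tr_re_nonneg (u : ℂ) (hu : ‖u‖ = 1) (M : Mat 2) (hM : M.PosSemidef) :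
    0 ≤ (((8:ℝ)⁻¹ • (!![1, starRingEnd ℂ u; u, 1] : Mat 2)) * M).trace.re := by
  obtain ⟨h00, h11, h10, hoff⟩ := psd_facts M hM
  rw [tr_re u M h10]
  have h1 : -‖M 0 1‖ ≤ (u * M 0 1).re := by
    have h2 := Complex.re_le_norm (-(u * M 0 1))
    rw [norm_neg, norm_mul, hu, one_mul, Complex.neg_re] at h2
    linarith
  nlinarith [norm_nonneg (M 0 1)]

lemma label2 (θ : ℝ) (x : Fin 4) : labelVec θ x 2 = 0 := by
  fin_cases x <;> simp [labelVec, Pi.neg_apply, Matrix.vecHead, Matrix.vecTail]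

lemma qubitEns_eq (θ : ℝ) (x : Fin 4) :
    qubitEns θ x = (8:ℝ)⁻¹ • (!![1, starRingEnd ℂ (uC (labelVec θ x));
      uC (labelVec θ x), 1] : Mat 2) := by
  rw [qubitEns]
  exact ens_eq _ (label2 θ x)

lemma epost_eq (θ : ℝ) {n : ℕ} (M : Fin n → Mat 2) (ν : Fin 2 → Fin 4 → Fin n → ℝ) :
    Epost fdisc ατ (qubitEns θ) M ν
      = ∑ z, ∑ x, ν (τpart x) x z * ((qubitEns θ x) * (M z)).trace.re := by
  unfold Epost
  rw [Finset.sum_congr rfl (fun (x : Fin 4) _ => ?_), Finset.sum_comm]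
  rw [Finset.sum_eq_single x]
  · rw [Finset.sum_eq_single (τpart x)]
    · simp [fdisc, ατ]
    · intro t _ ht
      simp [ατ, Ne.symm ht]
    · intro h
      exact absurd (Finset.mem_univ _) h
  · intro y _ hxy
    simp [fdisc, Ne.symm hxy]
  · intro h
    exact absurd (Finset.mem_univ _) h

lemma eprior_eq (θ : ℝ) (N : Fin 2 → Fin 4 → Mat 2) :
    Eprior fdisc ατ (qubitEns θ) N
      = ∑ x, ((qubitEns θ x) * (N (τpart x) x)).trace.re := by
  unfold Eprior
  refine Finset.sum_congr rfl (fun (x : Fin 4) _ => ?_)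
  rw [Finset.sum_eq_single x]
  · rw [Finset.sum_eq_single (τpart x)]
    · simp [fdisc, ατ]
    · intro t _ ht
      simp [ατ, Ne.symm ht]
    · intro h
      exact absurd (Finset.mem_univ _) h
  · intro y _ hxy
    simp [fdisc, Ne.symm hxy]
  · intro h
    exact absurd (Finset.mem_univ _) h

lemma uC0 (θ : ℝ) : uC (labelVec θ 0)
    = (Real.cos (θ/2) : ℂ) + (Real.sin (θ/2) : ℂ) * Complex.I := by
  simp [uC, labelVec, Matrix.vecHead, Matrix.vecTail]

lemma uC1 (θ : ℝ) : uC (labelVec θ 1) = -uC (labelVec θ 0) := by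
  simp [uC, labelVec, Pi.neg_apply, Matrix.vecHead, Matrix.vecTail]
  ring

lemma uC2 (θ : ℝ) : uC (labelVec θ 2)
    = (Real.cos (θ/2) : ℂ) - (Real.sin (θ/2) : ℂ) * Complex.I := by
  simp [uC, labelVec, Matrix.vecHead, Matrix.vecTail]
  ring

lemma uC3 (θ : ℝ) : uC (labelVec θ 3) = -uC (labelVec θ 2) := by
  simp [uC, labelVec, Pi.neg_apply, Matrix.vecHead, Matrix.vecTail]
  ring

lemma normSq_u0 (θ : ℝ) : Complex.normSq (uC (labelVec θ 0)) = 1 := by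
  rw [uC0]
  simp only [Complex.normSq_apply, Complex.add_re, Complex.add_im, Complex.mul_re,
    Complex.mul_im, Complex.I_re, Complex.I_im, Complex.ofReal_re, Complex.ofReal_im]
  nlinarith [Real.sin_sq_add_cos_sq (θ/2)]

lemma normSq_u2 (θ : ℝ) : Complex.normSq (uC (labelVec θ 2)) = 1 := by
  rw [uC2]
  simp only [Complex.normSq_apply, Complex.sub_re, Complex.sub_im, Complex.mul_re,
    Complex.mul_im, Complex.I_re, Complex.I_im, Complex.ofReal_re, Complex.ofReal_im]
  nlinarith [Real.sin_sq_add_cos_sq (θ/2)]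

lemma normSq_u (θ : ℝ) (x : Fin 4) : Complex.normSq (uC (labelVec θ x)) = 1 := by
  fin_cases x
  · exact normSq_u0 θ
  · exact (by rw [uC1, Complex.normSq_neg]; exact normSq_u0 θ :
      Complex.normSq (uC (labelVec θ 1)) = 1)
  · exact normSq_u2 θ
  · exact (by rw [uC3, Complex.normSq_neg]; exact normSq_u2 θ :
      Complex.normSq (uC (labelVec θ 3)) = 1)

lemma abs_u (θ : ℝ) (x : Fin 4) : ‖uC (labelVec θ x)‖ = 1 := by
  rw [Complex.norm_def, normSq_u, Real.sqrt_one]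

lemma τ0 : τpart 0 = 0 := rfl
lemma τ1 : τpart 1 = 0 := rfl
lemma τ2 : τpart 2 = 1 := rfl
lemma τ3 : τpart 3 = 1 := rfl

lemma prior_ub (θ : ℝ) (N : Fin 2 → Fin 4 → Mat 2) (hN : ∀ t, IsMeasurement (N t)) :
    Eprior fdisc ατ (qubitEns θ) N ≤ 1 := by
  rw [eprior_eq]
  have hterm : ∀ x : Fin 4, ((qubitEns θ x) * (N (τpart x) x)).trace.re ≤ 1/4 := by
    intro x
    have hsum : ∑ y, ((qubitEns θ x) * (N (τpart x) y)).trace.re = 1/4 := by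
      have h1 : ∑ y, ((qubitEns θ x) * (N (τpart x) y)).trace = (qubitEns θ x).trace := by
        rw [← Matrix.trace_sum, ← Finset.mul_sum, (hN (τpart x)).2, mul_one]
      have h2 : (qubitEns θ x).trace.re = 1/4 := by
        rw [qubitEns_eq]
        simp [Matrix.trace_fin_two, Matrix.smul_apply]
        norm_num
      rw [← Complex.re_sum, h1, h2]
    rw [← hsum]
    exact Finset.single_le_sum
      (f := fun y => ((qubitEns θ x) * (N (τpart x) y)).trace.re)
      (fun y _ => by rw [qubitEns_eq]; exact tr_re_nonneg _ (abs_u θ x) _ ((hN (τpart x)).1 y))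
      (Finset.mem_univ x)
  refine le_trans (Finset.sum_le_sum (fun x _ => hterm x)) (by norm_num)

def Nopt (θ : ℝ) : Fin 2 → Fin 4 → Mat 2 := fun t y => if τpart y = t then
    (2:ℝ)⁻¹ • (!![1, starRingEnd ℂ (uC (labelVec θ y)); uC (labelVec θ y), 1] : Mat 2) else 0

lemma Nopt_meas (θ : ℝ) (t : Fin 2) : IsMeasurement (Nopt θ t) := by
  constructor
  · intro y
    rw [Nopt]
    split
    · exact psd2 _ (by norm_num) _ (normSq_u θ y)
    · exact Matrix.PosSemidef.zero
  · rw [Fin.sum_univ_four]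
    fin_cases t
    · show Nopt θ 0 0 + Nopt θ 0 1 + Nopt θ 0 2 + Nopt θ 0 3 = 1
      rw [show (Nopt θ 0 2) = 0 by simp [Nopt, τpart], show (Nopt θ 0 3) = 0 by simp [Nopt, τpart],
        show Nopt θ 0 0 = (2:ℝ)⁻¹ • (!![1, starRingEnd ℂ (uC (labelVec θ 0)); uC (labelVec θ 0), 1] : Mat 2) by simp [Nopt, τpart],
        show Nopt θ 0 1 = (2:ℝ)⁻¹ • (!![1, starRingEnd ℂ (uC (labelVec θ 1)); uC (labelVec θ 1), 1] : Mat 2) by simp [Nopt, τpart],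
        uC1]
      ext i j
      fin_cases i <;> fin_cases j <;>
        simp [Matrix.smul_apply, Matrix.add_apply, Matrix.one_apply] <;> ring_nf
    · show Nopt θ 1 0 + Nopt θ 1 1 + Nopt θ 1 2 + Nopt θ 1 3 = 1
      rw [show (Nopt θ 1 0) = 0 by simp [Nopt, τpart], show (Nopt θ 1 1) = 0 by simp [Nopt, τpart],
        show Nopt θ 1 2 = (2:ℝ)⁻¹ • (!![1, starRingEnd ℂ (uC (labelVec θ 2)); uC (labelVec θ 2), 1] : Mat 2) by simp [Nopt, τpart],
        show Nopt θ 1 3 = (2:ℝ)⁻¹ • (!![1, starRingEnd ℂ (uC (labelVec θ 3)); uC (labelVec θ 3), 1] : Mat 2) by simp [Nopt, τpart],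
        uC3]
      ext i j
      fin_cases i <;> fin_cases j <;>
        simp [Matrix.smul_apply, Matrix.add_apply, Matrix.one_apply] <;> ring_nf

lemma prior_val (θ : ℝ) : Eprior fdisc ατ (qubitEns θ) (Nopt θ) = 1 := by
  rw [eprior_eq]
  have hterm : ∀ x : Fin 4, ((qubitEns θ x) * (Nopt θ (τpart x) x)).trace.re = 1/4 := by
    intro x
    have hx : Nopt θ (τpart x) x
        = (2:ℝ)⁻¹ • (!![1, starRingEnd ℂ (uC (labelVec θ x)); uC (labelVec θ x), 1] : Mat 2) := by
      unfold Nopt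
      rw [if_pos rfl]
    rw [qubitEns_eq, hx]
    set u := uC (labelVec θ x) with hu
    set B := (2:ℝ)⁻¹ • (!![1, starRingEnd ℂ u; u, 1] : Mat 2) with hB
    have hA10 : (!![1, starRingEnd ℂ u; u, 1] : Mat 2) 1 0 = u := by simp
    have hA01 : (!![1, starRingEnd ℂ u; u, 1] : Mat 2) 0 1 = starRingEnd ℂ u := by simp
    have h10 : B 1 0 = starRingEnd ℂ (B 0 1) := by
      rw [hB, Matrix.smul_apply, Matrix.smul_apply, hA10, hA01, Complex.real_smul,
        Complex.real_smul, RingHom.map_mul, Complex.conj_conj, Complex.conj_ofReal]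
    rw [tr_re u B h10]
    have e00 : (B 0 0).re = 2⁻¹ := by rw [hB]; simp [Matrix.smul_apply]
    have e11 : (B 1 1).re = 2⁻¹ := by rw [hB]; simp [Matrix.smul_apply]
    have e01 : (u * B 0 1).re = 2⁻¹ := by
      rw [hB, Matrix.smul_apply, hA01, Complex.real_smul, mul_left_comm, Complex.mul_conj,
        hu, normSq_u]
      push_cast
      norm_num
    rw [e00, e11, e01]
    norm_num
  rw [Fin.sum_univ_four, hterm 0, hterm 1, hterm 2, hterm 3]
  norm_num

lemma prior_part (θ : ℝ) : EpriorMax fdisc ατ (qubitEns θ) = 1 := by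
  unfold EpriorMax
  apply le_antisymm
  · apply Real.sSup_le _ (by norm_num)
    rintro p ⟨N, hN, rfl⟩
    exact prior_ub θ N hN
  · refine le_csSup ⟨1, ?_⟩ ⟨Nopt θ, fun t => Nopt_meas θ t, (prior_val θ).symm⟩
    rintro p ⟨N, hN, rfl⟩
    exact prior_ub θ N hN

lemma perz (c s : ℝ) (hc : 0 < c) (hsc : s^2 ≤ c^2)
    (a0 a1 b0 b1 : ℝ) (ha0 : 0 ≤ a0) (ha1 : 0 ≤ a1) (hb0 : 0 ≤ b0) (hb1 : 0 ≤ b1)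
    (hA : a0 + a1 ≤ 1) (hB : b0 + b1 ≤ 1)
    (m01 : ℂ) (T : ℝ) (hT : 0 ≤ T) (hoff : 2 * ‖m01‖ ≤ T) :
    a0 * ((8:ℝ)⁻¹ * (T + 2 * (((c:ℂ) + (s:ℂ) * Complex.I) * m01).re))
      + a1 * ((8:ℝ)⁻¹ * (T + 2 * -(((c:ℂ) + (s:ℂ) * Complex.I) * m01).re))
      + b0 * ((8:ℝ)⁻¹ * (T + 2 * (((c:ℂ) - (s:ℂ) * Complex.I) * m01).re))
      + b1 * ((8:ℝ)⁻¹ * (T + 2 * -(((c:ℂ) - (s:ℂ) * Complex.I) * m01).re))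
      ≤ (1/4) * (1 + c) * T := by
  set W : ℂ := ((a0 - a1 : ℝ) : ℂ) * ((c:ℂ) + (s:ℂ) * Complex.I)
      + ((b0 - b1 : ℝ) : ℂ) * ((c:ℂ) - (s:ℂ) * Complex.I) with hW
  have hlin : (a0 - a1) * (((c:ℂ) + (s:ℂ) * Complex.I) * m01).re
      + (b0 - b1) * (((c:ℂ) - (s:ℂ) * Complex.I) * m01).re = (W * m01).re := by
    rw [hW]
    simp only [add_mul, Complex.add_re, mul_assoc, Complex.re_ofReal_mul]
  have hp2 : (a0 - a1)^2 ≤ 1 := by nlinarith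
  have hq2 : (b0 - b1)^2 ≤ 1 := by nlinarith
  have hnsq : Complex.normSq W
      = ((a0 - a1) + (b0 - b1))^2 * c^2 + ((a0 - a1) - (b0 - b1))^2 * s^2 := by
    rw [hW]
    simp only [Complex.normSq_apply, Complex.add_re, Complex.add_im, Complex.sub_re,
      Complex.sub_im, Complex.mul_re, Complex.mul_im, Complex.I_re, Complex.I_im,
      Complex.ofReal_re, Complex.ofReal_im]
    ring
  have habsW : ‖W‖ ≤ 2 * c := by
    rw [Complex.norm_def]
    calc Real.sqrt (Complex.normSq W) ≤ Real.sqrt ((2*c)^2) := by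
          apply Real.sqrt_le_sqrt
          rw [hnsq]
          nlinarith [sq_nonneg ((a0-a1)+(b0-b1)), sq_nonneg ((a0-a1)-(b0-b1)), sq_nonneg c]
      _ = 2 * c := Real.sqrt_sq (by positivity)
  have hre : (W * m01).re ≤ 2 * c * ‖m01‖ :=
    calc (W * m01).re ≤ ‖W * m01‖ := Complex.re_le_norm _
      _ = ‖W‖ * ‖m01‖ := norm_mul _ _
      _ ≤ 2 * c * ‖m01‖ :=
          mul_le_mul_of_nonneg_right habsW (norm_nonneg _)
  have key : a0 * ((8:ℝ)⁻¹ * (T + 2 * (((c:ℂ) + (s:ℂ) * Complex.I) * m01).re))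
      + a1 * ((8:ℝ)⁻¹ * (T + 2 * -(((c:ℂ) + (s:ℂ) * Complex.I) * m01).re))
      + b0 * ((8:ℝ)⁻¹ * (T + 2 * (((c:ℂ) - (s:ℂ) * Complex.I) * m01).re))
      + b1 * ((8:ℝ)⁻¹ * (T + 2 * -(((c:ℂ) - (s:ℂ) * Complex.I) * m01).re))
      = (8:ℝ)⁻¹ * ((a0 + a1 + b0 + b1) * T
          + 2 * ((a0 - a1) * (((c:ℂ) + (s:ℂ) * Complex.I) * m01).re
            + (b0 - b1) * (((c:ℂ) - (s:ℂ) * Complex.I) * m01).re)) := by ring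
  rw [key, hlin]
  have h5 : (a0 + a1 + b0 + b1) * T ≤ 2 * T :=
    mul_le_mul_of_nonneg_right (by linarith) hT
  have h6 : (W * m01).re ≤ c * T := by
    refine le_trans hre ?_
    have := mul_le_mul_of_nonneg_left hoff hc.le
    linarith
  linarith

lemma post_ub (θ : ℝ) (hc : 0 < Real.cos (θ/2)) (hs2c2 : Real.sin (θ/2)^2 ≤ Real.cos (θ/2)^2)
    {n : ℕ} (M : Fin n → Mat 2) (ν : Fin 2 → Fin 4 → Fin n → ℝ)
    (hM : IsMeasurement M) (hν : IsPostProc ν) :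
    Epost fdisc ατ (qubitEns θ) M ν ≤ (1/2) * (1 + Real.cos (θ/2)) := by
  rw [epost_eq]
  have hz : ∀ z, (∑ x, ν (τpart x) x z * ((qubitEns θ x) * (M z)).trace.re)
      ≤ (1/4) * (1 + Real.cos (θ/2)) * ((M z 0 0).re + (M z 1 1).re) := by
    intro z
    obtain ⟨h00, h11, h10, hoff⟩ := psd_facts (M z) (hM.1 z)
    have htr : ∀ x : Fin 4, ((qubitEns θ x) * (M z)).trace.re
        = (8:ℝ)⁻¹ * ((M z 0 0).re + (M z 1 1).re
            + 2 * ((uC (labelVec θ x)) * (M z 0 1)).re) := by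
      intro x
      rw [qubitEns_eq]
      exact tr_re _ _ h10
    rw [Fin.sum_univ_four, htr 0, htr 1, htr 2, htr 3, uC1, uC3, uC0, uC2, τ0, τ1, τ2, τ3]
    simp only [neg_mul, Complex.neg_re]
    have hsum0 := hν.2 0 z
    have hsum1 := hν.2 1 z
    rw [Fin.sum_univ_four] at hsum0 hsum1
    exact perz (Real.cos (θ/2)) (Real.sin (θ/2)) hc hs2c2 _ _ _ _
      (hν.1 0 0 z) (hν.1 0 1 z) (hν.1 1 2 z) (hν.1 1 3 z)
      (by linarith [hν.1 0 2 z, hν.1 0 3 z]) (by linarith [hν.1 1 0 z, hν.1 1 1 z])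
      (M z 0 1) _ (by linarith) hoff
  calc ∑ z, ∑ x, ν (τpart x) x z * ((qubitEns θ x) * (M z)).trace.re
      ≤ ∑ z, (1/4) * (1 + Real.cos (θ/2)) * ((M z 0 0).re + (M z 1 1).re) :=
        Finset.sum_le_sum (fun z _ => hz z)
    _ = (1/4) * (1 + Real.cos (θ/2)) * (∑ z, ((M z 0 0).re + (M z 1 1).re)) := by
        rw [Finset.mul_sum]
    _ = (1/2) * (1 + Real.cos (θ/2)) := by
        have h0 : (∑ z, (M z 0 0)) = 1 := by
          have := congrFun (congrFun hM.2 0) 0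
          rw [Matrix.sum_apply] at this
          simpa using this
        have h1 : (∑ z, (M z 1 1)) = 1 := by
          have := congrFun (congrFun hM.2 1) 1
          rw [Matrix.sum_apply] at this
          simpa using this
        have h2 : (∑ z, ((M z 0 0).re + (M z 1 1).re)) = 2 := by
          rw [Finset.sum_add_distrib, ← Complex.re_sum, ← Complex.re_sum, h0, h1]
          norm_num
        rw [h2]
        ring

def Mopt : Fin 2 → Mat 2 :=
  ![(2:ℝ)⁻¹ • (!![1, 1; 1, 1] : Mat 2), (2:ℝ)⁻¹ • (!![1, -1; -1, 1] : Mat 2)]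

lemma Mopt_meas : IsMeasurement Mopt := by
  constructor
  · intro z
    fin_cases z
    · exact (by
        rw [show Mopt 0 = (2:ℝ)⁻¹ • (!![1, starRingEnd ℂ (1:ℂ); (1:ℂ), 1] : Mat 2) by
          norm_num [Mopt]]
        exact psd2 _ (by norm_num) _ (by simp) : (Mopt 0).PosSemidef)
    · exact (by
        rw [show Mopt 1 = (2:ℝ)⁻¹ • (!![1, starRingEnd ℂ (-1:ℂ); (-1:ℂ), 1] : Mat 2) by
          norm_num [Mopt]]
        exact psd2 _ (by norm_num) _ (by simp) : (Mopt 1).PosSemidef)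
  · rw [Fin.sum_univ_two]
    show (2:ℝ)⁻¹ • (!![1, 1; 1, 1] : Mat 2) + (2:ℝ)⁻¹ • (!![1, -1; -1, 1] : Mat 2) = 1
    ext i j
    fin_cases i <;> fin_cases j <;>
      simp [Matrix.smul_apply, Matrix.add_apply, Matrix.one_apply] <;> norm_num

def guessF : Fin 2 → Fin 2 → Fin 4 := ![![0, 1], ![2, 3]]

def νopt : Fin 2 → Fin 4 → Fin 2 → ℝ := fun t y z => if y = guessF t z then 1 else 0

lemma νopt_pp : IsPostProc νopt := by
  constructor
  · intro t y z
    unfold νopt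
    split <;> norm_num
  · intro t z
    simp [νopt]

lemma post_val (θ : ℝ) :
    Epost fdisc ατ (qubitEns θ) Mopt νopt = (1/2) * (1 + Real.cos (θ/2)) := by
  rw [epost_eq, Fin.sum_univ_two, Fin.sum_univ_four, Fin.sum_univ_four]
  have h10 : ∀ z : Fin 2, Mopt z 1 0 = starRingEnd ℂ (Mopt z 0 1) := by
    intro z
    fin_cases z <;> simp [Mopt, Matrix.smul_apply, Complex.ext_iff]
  have htr : ∀ (x : Fin 4) (z : Fin 2), ((qubitEns θ x) * (Mopt z)).trace.re
      = (8:ℝ)⁻¹ * ((Mopt z 0 0).re + (Mopt z 1 1).re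
          + 2 * ((uC (labelVec θ x)) * (Mopt z 0 1)).re) := by
    intro x z
    rw [qubitEns_eq]
    exact tr_re _ _ (h10 z)
  rw [htr 0 0, htr 1 0, htr 2 0, htr 3 0, htr 0 1, htr 1 1, htr 2 1, htr 3 1]
  have hco : ∀ z : Fin 2, (Mopt z 0 0).re + (Mopt z 1 1).re = 1 := by
    intro z
    fin_cases z <;> simp [Mopt, Matrix.smul_apply] <;> norm_num
  rw [hco 0, hco 1]
  have hm0 : Mopt 0 0 1 = ((2:ℝ)⁻¹ : ℂ) := by
    simp [Mopt, Matrix.smul_apply]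
  have hm1 : Mopt 1 0 1 = -((2:ℝ)⁻¹ : ℂ) := by
    simp [Mopt, Matrix.smul_apply]
  rw [hm0, hm1, uC1, uC3, uC0, uC2]
  have hν : ∀ (t : Fin 2) (y : Fin 4) (z : Fin 2), νopt t y z = if y = guessF t z then 1 else 0 :=
    fun _ _ _ => rfl
  norm_num [νopt, guessF, τpart, -Complex.ofReal_cos, -Complex.ofReal_sin,
    show ((3:Fin 4) ≠ 2) by decide, show ((2:Fin 4) ≠ 3) by decide]
  norm_num [show (![0, 0, 1, 1] : Fin 4 → Fin 2) 2 = 1 from rfl,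
    show (![0, 0, 1, 1] : Fin 4 → Fin 2) 3 = 1 from rfl,
    show ((3:Fin 4) ≠ 2) by decide, show ((2:Fin 4) ≠ 3) by decide]
  ring

theorem stmt17 (θ : ℝ) (hθ : θ ∈ Set.Ioc 0 (Real.pi / 2)) :
    EpostMax fdisc ατ (qubitEns θ)
        = (1 / 2) * (1 + Real.sqrt ((1 + Real.cos θ) / 2)) ∧
    EpriorMax fdisc ατ (qubitEns θ) = 1 := by
  obtain ⟨hθ0, hθ2⟩ := hθ
  have hπ := Real.pi_pos
  have hc : 0 < Real.cos (θ/2) := Real.cos_pos_of_mem_Ioo ⟨by linarith, by linarith⟩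
  have h2c : Real.cos θ = 2 * Real.cos (θ/2)^2 - 1 := by
    have h := Real.cos_two_mul (θ/2)
    rw [show 2*(θ/2) = θ by ring] at h
    exact h
  have hpy : Real.sin (θ/2)^2 + Real.cos (θ/2)^2 = 1 := Real.sin_sq_add_cos_sq _
  have hcosθ : 0 ≤ Real.cos θ := Real.cos_nonneg_of_mem_Icc ⟨by linarith, hθ2⟩
  have hs2c2 : Real.sin (θ/2)^2 ≤ Real.cos (θ/2)^2 := by nlinarith
  have hsqrt : Real.sqrt ((1 + Real.cos θ)/2) = Real.cos (θ/2) := by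
    rw [show (1 + Real.cos θ)/2 = Real.cos (θ/2)^2 by rw [h2c]; ring, Real.sqrt_sq hc.le]
  constructor
  · rw [show (1 + Real.cos θ) / 2 = (1 + Real.cos θ)/2 by ring, hsqrt]
    unfold EpostMax
    apply le_antisymm
    · apply Real.sSup_le _ (by nlinarith [hc.le])
      rintro p ⟨n, M, ν, hM, hν, rfl⟩
      exact post_ub θ hc hs2c2 M ν hM hν
    · apply le_csSup
      · refine ⟨(1/2) * (1 + Real.cos (θ/2)), ?_⟩
        rintro p ⟨n, M, ν, hM, hν, rfl⟩
        exact post_ub θ hc hs2c2 M ν hM hν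
      · exact ⟨2, Mopt, νopt, Mopt_meas, νopt_pp, (post_val θ).symm⟩
  · exact prior_part θ
end
end

section
/- Qubit discrimination with exclusion of one wrong option: Fix θ ∈ (0, π/2], let a = (cos(θ/2), sin(θ/2), 0) and b = (cos(θ/2), −sin(θ/2), 0) in ℝ³, and let X = Y = T = {+a, −a, +b, −b}. Define the state ensemble on ℂ² by 𝓔(x) = (1/8)(𝟙 + x·σ), where x·σ = x₁σ₁ + x₂σ₂ + x₃σ₃ with σ₁, σ₂, σ₃ the Pauli matrices. Take the score function f_δ(x,y) = δ_{x,y} and the partial information map α_ex(t | x) = (1 − δ_{x,t})/3. Then E^prior_{f_δ,α_ex}(𝓔) = 2/3 and E^post_{f_δ,α_ex}(𝓔) = (1/12)·(4 + √(10 + 6·cos θ)). -/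
open scoped BigOperators
open Matrix
open scoped ComplexOrder

noncomputable section

def αex : Fin 4 → Fin 4 → ℝ := fun t x => (1 - if x = t then 1 else 0) / 3


/-! ### Auxiliary lemmas -/

lemma quadform_nonneg (u v w r p q s t : ℝ) (hr : 0 ≤ r) (h : u^2+v^2+w^2 ≤ r^2) :
    0 ≤ (r+w)*(p^2+q^2) + (r-w)*(s^2+t^2) + 2*(u*(p*s+q*t) + v*(p*t-q*s)) := by
  have hX : (0:ℝ) ≤ p^2+q^2 := by positivity
  have hY : (0:ℝ) ≤ s^2+t^2 := by positivity
  have hw1 : 0 ≤ r + w := by nlinarith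
  have hw2 : 0 ≤ r - w := by nlinarith
  have hA : 0 ≤ (r+w)*(p^2+q^2) + (r-w)*(s^2+t^2) :=
    add_nonneg (mul_nonneg hw1 hX) (mul_nonneg hw2 hY)
  have hCS : (u*(p*s+q*t) + v*(p*t-q*s))^2 ≤ (u^2+v^2) * ((p^2+q^2)*(s^2+t^2)) := by
    nlinarith [sq_nonneg (u*(p*t-q*s) - v*(p*s+q*t))]
  have hKey : 4*((u^2+v^2)*((p^2+q^2)*(s^2+t^2))) ≤ ((r+w)*(p^2+q^2) + (r-w)*(s^2+t^2))^2 := by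
    nlinarith [sq_nonneg ((r+w)*(p^2+q^2) - (r-w)*(s^2+t^2)), mul_nonneg hX hY]
  nlinarith [hA, hCS, hKey]

lemma dotPauli_eq (v : Fin 3 → ℝ) :
    dotPauli v = !![(v 2 : ℂ), (v 0 : ℂ) - (v 1 : ℂ)*Complex.I;
                    (v 0 : ℂ) + (v 1 : ℂ)*Complex.I, -(v 2 : ℂ)] := by
  ext i j
  fin_cases i <;> fin_cases j <;>
    (simp [dotPauli, pauli1, pauli2, pauli3]; try ring)

lemma dotPauli_neg (v : Fin 3 → ℝ) : dotPauli (-v) = -dotPauli v := by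
  simp only [dotPauli, Pi.neg_apply, Complex.ofReal_neg]
  module

lemma psd_base (v : Fin 3 → ℝ) (r : ℝ) (hr : 0 ≤ r) (h : v 0^2 + v 1^2 + v 2^2 ≤ r^2) :
    ((r : ℂ) • (1 : Mat 2) + dotPauli v).PosSemidef := by
  refine Matrix.PosSemidef.of_dotProduct_mulVec_nonneg ?_ ?_
  · rw [Matrix.IsHermitian, dotPauli_eq]
    ext i j
    fin_cases i <;> fin_cases j <;>
      simp [Matrix.conjTranspose_apply, Matrix.one_apply, Complex.ext_iff]
  · intro x
    rw [dotPauli_eq, Complex.le_def]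
    constructor
    · simp only [dotProduct, Matrix.mulVec, Fin.sum_univ_two, Matrix.one_apply,
        Matrix.add_apply, Matrix.smul_apply, Pi.star_apply, Matrix.cons_val', Matrix.cons_val_zero,
        Matrix.cons_val_one, Matrix.head_cons, Matrix.head_fin_const, Matrix.empty_val',
        Matrix.cons_val_fin_one]
      simp [Complex.add_re, Complex.mul_re, Complex.add_im, Complex.mul_im]
      ring_nf
      have := quadform_nonneg (v 0) (v 1) (v 2) r (x 0).re (x 0).im (x 1).re (x 1).im hr h
      nlinarith [this]
    · simp [dotProduct, Matrix.mulVec, Fin.sum_univ_two, Matrix.one_apply,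
        Complex.add_im, Complex.mul_im]
      ring_nf

lemma psd_smul {M : Mat 2} (hM : M.PosSemidef) (c : ℝ) (hc : 0 ≤ c) :
    ((c : ℂ) • M).PosSemidef := by
  refine Matrix.PosSemidef.of_dotProduct_mulVec_nonneg ?_ ?_
  · rw [Matrix.IsHermitian, Matrix.conjTranspose_smul, hM.1]
    norm_num
  · intro x
    rw [Matrix.smul_mulVec, dotProduct_smul, smul_eq_mul]
    exact mul_nonneg (by exact_mod_cast Complex.zero_le_real.2 hc) (hM.dotProduct_mulVec_nonneg x)

lemma trace_mul_bloch (v w : Fin 3 → ℝ) :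
    (((1:Mat 2) + dotPauli v) * ((1:Mat 2) + dotPauli w)).trace
      = ((2 + 2*(v 0 * w 0 + v 1 * w 1 + v 2 * w 2) : ℝ) : ℂ) := by
  rw [dotPauli_eq, dotPauli_eq]
  simp [Matrix.trace, Matrix.mul_apply, Fin.sum_univ_two, Matrix.one_apply, Matrix.diag,
    Complex.ext_iff, Complex.add_re, Complex.mul_re, Complex.add_im, Complex.mul_im]
  constructor <;> ring

lemma psd_diag_re_nonneg {n : ℕ} {A : Matrix (Fin n) (Fin n) ℂ} (hA : A.PosSemidef)
    (i : Fin n) : 0 ≤ (A i i).re := by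
  have := hA.dotProduct_mulVec_nonneg (Pi.single i 1)
  rw [Complex.le_def] at this
  have h2 : (dotProduct (star (Pi.single i 1)) (A *ᵥ Pi.single i 1)) = A i i := by
    simp [dotProduct, Matrix.mulVec, Pi.single_apply]
  rw [h2] at this
  simpa using this.1

lemma trace_re_nonneg {n : ℕ} {A : Matrix (Fin n) (Fin n) ℂ} (hA : A.PosSemidef) :
    0 ≤ A.trace.re := by
  rw [Matrix.trace, Complex.re_sum]
  exact Finset.sum_nonneg fun i _ => psd_diag_re_nonneg hA i

lemma trace_mul_psd_nonneg {n : ℕ} {A B : Matrix (Fin n) (Fin n) ℂ}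
    (hA : A.PosSemidef) (hB : B.PosSemidef) : 0 ≤ (A * B).trace.re := by
  open scoped MatrixOrder in
  obtain ⟨C, rfl⟩ := CStarAlgebra.nonneg_iff_eq_star_mul_self.mp hA.nonneg
  rw [Matrix.mul_assoc, Matrix.trace_mul_comm]
  exact trace_re_nonneg (hB.mul_mul_conjTranspose_same C)

lemma trace_le_of_psd {A B M : Mat 2} (hM : M.PosSemidef) (h : (B - A).PosSemidef) :
    (A * M).trace.re ≤ (B * M).trace.re := by
  have := trace_mul_psd_nonneg h hM
  rw [Matrix.sub_mul, Matrix.trace_sub, Complex.sub_re] at this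
  linarith

lemma ofReal_smul_mat (r : ℝ) (A : Mat 2) : r • A = ((r : ℂ) • A) := by
  ext i j; simp [Complex.real_smul]

lemma trace_smul_mul_re (a : ℝ) (A B : Mat 2) :
    ((((a:ℂ)) • A) * B).trace.re = a * (A * B).trace.re := by
  rw [Matrix.smul_mul, Matrix.trace_smul]
  simp

lemma trace_bloch_mul_re (a b : ℝ) (v w : Fin 3 → ℝ) :
    ((((a:ℂ)) • ((1:Mat 2) + dotPauli v)) * (((b:ℂ)) • ((1:Mat 2) + dotPauli w))).trace.re
      = a * b * (2 + 2*(v 0 * w 0 + v 1 * w 1 + v 2 * w 2)) := by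
  rw [Matrix.smul_mul, Matrix.mul_smul, Matrix.trace_smul, Matrix.trace_smul, trace_mul_bloch]
  simp [smul_eq_mul]
  ring

lemma psd_rsmul {M : Mat 2} (hM : M.PosSemidef) {c : ℝ} (hc : 0 ≤ c) :
    (c • M).PosSemidef := by
  rw [ofReal_smul_mat]; exact psd_smul hM c hc

lemma psd_zero : (0 : Mat 2).PosSemidef := by
  constructor
  · simp [Matrix.IsHermitian]
  · intro x; simp

lemma psd_one_add (v : Fin 3 → ℝ) (h : v 0^2 + v 1^2 + v 2^2 ≤ 1) :
    ((1:Mat 2) + dotPauli v).PosSemidef := by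
  simpa using psd_base v 1 zero_le_one (by simpa using h)

lemma trace_rsmul_mul_re (a : ℝ) (A B : Mat 2) :
    ((a • A) * B).trace.re = a * (A * B).trace.re := by
  rw [ofReal_smul_mat, trace_smul_mul_re]

lemma trace_rbloch_mul_re (a b : ℝ) (v w : Fin 3 → ℝ) :
    ((a • ((1:Mat 2) + dotPauli v)) * (b • ((1:Mat 2) + dotPauli w))).trace.re
      = a * b * (2 + 2*(v 0 * w 0 + v 1 * w 1 + v 2 * w 2)) := by
  rw [ofReal_smul_mat, ofReal_smul_mat, trace_bloch_mul_re]

def blochP (v : Fin 3 → ℝ) : Mat 2 := (2:ℝ)⁻¹ • ((1 : Mat 2) + dotPauli v)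

lemma blochP_psd (v : Fin 3 → ℝ) (h : v 0^2 + v 1^2 + v 2^2 ≤ 1) : (blochP v).PosSemidef := by
  rw [blochP]
  exact psd_rsmul (psd_one_add v h) (by norm_num)

lemma blochP_add_neg (v : Fin 3 → ℝ) : blochP v + blochP (-v) = 1 := by
  rw [blochP, blochP, dotPauli_neg]
  module

lemma qubitEns_def (θ : ℝ) (x : Fin 4) :
    qubitEns θ x = (8:ℝ)⁻¹ • ((1 : Mat 2) + dotPauli (labelVec θ x)) := rfl

lemma dotPauli_comb (a b : ℝ) (v w : Fin 3 → ℝ) :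
    dotPauli (fun i => a * v i + b * w i) = a • dotPauli v + b • dotPauli w := by
  ext i j
  fin_cases i <;> fin_cases j <;>
    (simp [dotPauli_eq, Complex.real_smul]; try (push_cast; ring))

lemma key_identity (S : ℝ) (D1 D2 : Mat 2) :
    ((4+S)/24 : ℝ) • (1:Mat 2)
      - ((8⁻¹:ℝ) • ((1:Mat 2) + D1) + (3⁻¹:ℝ) • ((8⁻¹:ℝ) • ((1:Mat 2) + D2)))
    = (24⁻¹:ℝ) • (S • (1:Mat 2) + ((-3 : ℝ) • D1 + (-1 : ℝ) • D2)) := by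
  module

lemma psd_rbase (v : Fin 3 → ℝ) (r : ℝ) (hr : 0 ≤ r) (h : v 0^2 + v 1^2 + v 2^2 ≤ r^2) :
    ((r : ℝ) • (1 : Mat 2) + dotPauli v).PosSemidef := by
  rw [ofReal_smul_mat]
  exact psd_base v r hr h
set_option maxHeartbeats 2000000 in
theorem stmt18 (θ : ℝ) (hθ : θ ∈ Set.Ioc 0 (Real.pi / 2)) :
    EpriorMax fdisc αex (qubitEns θ) = 2 / 3 ∧
    EpostMax fdisc αex (qubitEns θ)
        = (1 / 12) * (4 + Real.sqrt (10 + 6 * Real.cos θ)) := by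
  have hπ := Real.pi_pos
  obtain ⟨hθ0, hθπ⟩ := hθ
  have hcs : Real.sin (θ/2)^2 + Real.cos (θ/2)^2 = 1 := Real.sin_sq_add_cos_sq _
  have hnorm1 : ∀ x : Fin 4,
      (labelVec θ x 0)^2 + (labelVec θ x 1)^2 + (labelVec θ x 2)^2 = 1 := by
    intro x; fin_cases x <;> simp [labelVec, Matrix.vecHead, Matrix.vecTail]
  have hEpsd : ∀ x : Fin 4, (qubitEns θ x).PosSemidef := by
    intro x
    rw [qubitEns_def]
    exact psd_rsmul (psd_one_add _ (le_of_eq (hnorm1 x))) (by norm_num)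
  have hlv3 : labelVec θ 3 = -(labelVec θ 2) := by
    ext i; fin_cases i <;> simp [labelVec, Matrix.vecHead, Matrix.vecTail]
  have hlv1 : labelVec θ 1 = -(labelVec θ 0) := by
    ext i; fin_cases i <;> simp [labelVec, Matrix.vecHead, Matrix.vecTail]
  have hcosθ : Real.cos θ = 2*Real.cos (θ/2)^2 - 1 := by
    rw [← Real.cos_two_mul]; ring_nf
  have hcosnn : 0 ≤ Real.cos θ := Real.cos_nonneg_of_mem_Icc ⟨by linarith, hθπ⟩
  have hdot : ∀ y1 y2 : Fin 4, y1 ≠ y2 →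
      labelVec θ y1 0 * labelVec θ y2 0 + labelVec θ y1 1 * labelVec θ y2 1
        + labelVec θ y1 2 * labelVec θ y2 2 ≤ Real.cos θ := by
    intro y1 y2 hne
    fin_cases y1 <;> fin_cases y2 <;>
      first
        | exact absurd rfl hne
        | (simp [labelVec, Matrix.vecHead, Matrix.vecTail]; nlinarith [hcs, hcosθ, hcosnn])
  constructor
  · -- prior part
    have hub : ∀ p ∈ {p : ℝ | ∃ N : Fin 4 → Fin 4 → Mat 2,
        (∀ t, IsMeasurement (N t)) ∧ p = Eprior fdisc αex (qubitEns θ) N}, p ≤ 2/3 := by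
      rintro p ⟨N, hN, rfl⟩
      have key : ∀ t y : Fin 4,
          (∑ x : Fin 4, fdisc x y * αex t x * ((qubitEns θ x) * (N t y)).trace.re)
            ≤ 12⁻¹ * (N t y).trace.re := by
        intro t y
        have hsingle : (∑ x : Fin 4, fdisc x y * αex t x * ((qubitEns θ x) * (N t y)).trace.re)
            = αex t y * ((qubitEns θ y) * (N t y)).trace.re := by
          rw [Finset.sum_eq_single y]
          · simp [fdisc]
          · intro x _ hxy; simp [fdisc, hxy]
          · simp
        rw [hsingle]
        have htrnn : 0 ≤ ((qubitEns θ y) * (N t y)).trace.re :=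
          trace_mul_psd_nonneg (hEpsd y) ((hN t).1 y)
        have hα : αex t y ≤ 3⁻¹ ∧ 0 ≤ αex t y := by
          unfold αex; split <;> norm_num
        have hpsd : ((12⁻¹:ℝ) • (1:Mat 2) - (3⁻¹:ℝ) • qubitEns θ y).PosSemidef := by
          have hE : (12⁻¹:ℝ) • (1:Mat 2) - (3⁻¹:ℝ) • qubitEns θ y
              = (24⁻¹:ℝ) • ((1:Mat 2) + dotPauli (-(labelVec θ y))) := by
            rw [qubitEns_def, dotPauli_neg]
            module
          rw [hE]
          refine psd_rsmul (psd_one_add _ ?_) (by norm_num)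
          simp only [Pi.neg_apply]
          nlinarith [hnorm1 y]
        have h2 : ((3⁻¹:ℝ) • qubitEns θ y * (N t y)).trace.re
            ≤ ((12⁻¹:ℝ) • (1:Mat 2) * (N t y)).trace.re :=
          trace_le_of_psd ((hN t).1 y) hpsd
        rw [trace_rsmul_mul_re, trace_rsmul_mul_re, Matrix.one_mul] at h2
        calc αex t y * ((qubitEns θ y) * (N t y)).trace.re
            ≤ 3⁻¹ * ((qubitEns θ y) * (N t y)).trace.re :=
              mul_le_mul_of_nonneg_right hα.1 htrnn
          _ ≤ 12⁻¹ * (N t y).trace.re := h2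
      have hNsum : ∀ t : Fin 4, (∑ y : Fin 4, (N t y).trace.re) = 2 := by
        intro t
        have : (∑ y : Fin 4, (N t y).trace) = 2 := by
          rw [← Matrix.trace_sum, (hN t).2]
          simp [Matrix.trace_one]
        calc (∑ y : Fin 4, (N t y).trace.re) = (∑ y : Fin 4, (N t y).trace).re := by
              rw [Complex.re_sum]
          _ = 2 := by rw [this]; norm_num
      have hreorder : Eprior fdisc αex (qubitEns θ) N
          = ∑ t : Fin 4, ∑ y : Fin 4, ∑ x : Fin 4,
              fdisc x y * αex t x * ((qubitEns θ x) * (N t y)).trace.re := by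
        simp only [Eprior, Fin.sum_univ_four]; ring
      rw [hreorder]
      calc (∑ t : Fin 4, ∑ y : Fin 4, ∑ x : Fin 4,
              fdisc x y * αex t x * ((qubitEns θ x) * (N t y)).trace.re)
          ≤ ∑ t : Fin 4, ∑ y : Fin 4, 12⁻¹ * (N t y).trace.re := by
            refine Finset.sum_le_sum fun t _ => Finset.sum_le_sum fun y _ => key t y
        _ = ∑ t : Fin 4, 12⁻¹ * (∑ y : Fin 4, (N t y).trace.re) := by
            simp [Finset.mul_sum]
        _ = 2/3 := by simp [hNsum]; norm_num
    have hmem : (2/3 : ℝ) ∈ {p : ℝ | ∃ N : Fin 4 → Fin 4 → Mat 2,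
        (∀ t, IsMeasurement (N t)) ∧ p = Eprior fdisc αex (qubitEns θ) N} := by
      refine ⟨fun t y => if t = 0 ∨ t = 1
        then (if y = 2 then blochP (labelVec θ 2) else
              if y = 3 then blochP (labelVec θ 3) else 0)
        else (if y = 0 then blochP (labelVec θ 0) else
              if y = 1 then blochP (labelVec θ 1) else 0), ?_, ?_⟩
      · intro t
        constructor
        · intro y
          dsimp only
          split_ifs <;>
            first
              | exact blochP_psd _ (le_of_eq (hnorm1 _))
              | exact psd_zero
        · dsimp only
          split_ifs with h
          · simp [Fin.sum_univ_four, hlv3]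
            exact blochP_add_neg (labelVec θ 2)
          · simp [Fin.sum_univ_four, hlv1]
            exact blochP_add_neg (labelVec θ 0)
      · have htr : ∀ x y : Fin 4, ((qubitEns θ x) * blochP (labelVec θ y)).trace.re
            = 16⁻¹ * (2 + 2*(labelVec θ x 0 * labelVec θ y 0 + labelVec θ x 1 * labelVec θ y 1
              + labelVec θ x 2 * labelVec θ y 2)) := by
          intro x y
          rw [qubitEns_def, blochP, trace_rbloch_mul_re]
          norm_num
        have hdd : ∀ x : Fin 4, labelVec θ x 0 * labelVec θ x 0
            + labelVec θ x 1 * labelVec θ x 1 + labelVec θ x 2 * labelVec θ x 2 = 1 := by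
          intro x; nlinarith [hnorm1 x]
        simp only [Eprior, Fin.sum_univ_four, fdisc, αex]
        simp (config := { decide := true }) only [ite_true, ite_false, reduceIte]
        norm_num [htr, hdd]
    exact le_antisymm (csSup_le ⟨2/3, hmem⟩ hub) (le_csSup ⟨2/3, hub⟩ hmem)
  · -- posterior part
    set S := Real.sqrt (10 + 6 * Real.cos θ) with hSdef
    have hS2 : S^2 = 10 + 6*Real.cos θ := Real.sq_sqrt (by linarith)
    have hSnn : 0 ≤ S := Real.sqrt_nonneg _
    have hSpos : 0 < S := by nlinarith
    have hc2 : 1/2 ≤ Real.cos (θ/2)^2 := by nlinarith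
    -- the key operator inequality
    have hpair : ∀ y1 y2 : Fin 4, y1 ≠ y2 →
        (((4+S)/24 : ℝ) • (1:Mat 2)
          - (qubitEns θ y1 + (3⁻¹:ℝ) • qubitEns θ y2)).PosSemidef := by
      intro y1 y2 hne
      have hE : ((4+S)/24 : ℝ) • (1:Mat 2) - (qubitEns θ y1 + (3⁻¹:ℝ) • qubitEns θ y2)
          = (24⁻¹:ℝ) • (S • (1:Mat 2)
              + dotPauli (fun i => (-3) * labelVec θ y1 i + (-1) * labelVec θ y2 i)) := by
        rw [qubitEns_def, qubitEns_def, dotPauli_comb]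
        exact key_identity S _ _
      rw [hE]
      refine psd_rsmul (psd_rbase _ S hSnn ?_) (by norm_num)
      nlinarith [hnorm1 y1, hnorm1 y2, hdot y1 y2 hne, hS2]
    have hub : ∀ p ∈ {p : ℝ | ∃ (n : ℕ) (M : Fin n → Mat 2) (ν : Fin 4 → Fin 4 → Fin n → ℝ),
        IsMeasurement M ∧ IsPostProc ν ∧ p = Epost fdisc αex (qubitEns θ) M ν},
        p ≤ (1/12) * (4 + S) := by
      rintro p ⟨n, M, ν, hM, hν, rfl⟩
      have hrw : Epost fdisc αex (qubitEns θ) M ν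
          = ∑ z, ∑ t : Fin 4, ∑ x : Fin 4,
              αex t x * ν t x z * ((qubitEns θ x) * (M z)).trace.re := by
        have h1 : ∀ x : Fin 4, (∑ y : Fin 4, ∑ t : Fin 4, ∑ z,
            fdisc x y * αex t x * ν t y z * ((qubitEns θ x) * (M z)).trace.re)
            = ∑ t : Fin 4, ∑ z, αex t x * ν t x z * ((qubitEns θ x) * (M z)).trace.re := by
          intro x
          rw [Finset.sum_eq_single x]
          · simp [fdisc]
          · intro y _ hxy
            simp [fdisc, Ne.symm hxy]
          · simp
        calc Epost fdisc αex (qubitEns θ) M ν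
            = ∑ x : Fin 4, ∑ t : Fin 4, ∑ z,
                αex t x * ν t x z * ((qubitEns θ x) * (M z)).trace.re :=
              Finset.sum_congr rfl fun x _ => h1 x
          _ = ∑ t : Fin 4, ∑ x : Fin 4, ∑ z,
                αex t x * ν t x z * ((qubitEns θ x) * (M z)).trace.re := Finset.sum_comm
          _ = ∑ t : Fin 4, ∑ z, ∑ x : Fin 4,
                αex t x * ν t x z * ((qubitEns θ x) * (M z)).trace.re :=
              Finset.sum_congr rfl fun t _ => Finset.sum_comm
          _ = ∑ z, ∑ t : Fin 4, ∑ x : Fin 4,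
                αex t x * ν t x z * ((qubitEns θ x) * (M z)).trace.re := Finset.sum_comm
      have hz : ∀ z, (∑ t : Fin 4, ∑ x : Fin 4,
          αex t x * ν t x z * ((qubitEns θ x) * (M z)).trace.re)
          ≤ (4+S)/24 * (M z).trace.re := by
        intro z
        set p : Fin 4 → ℝ := fun y => ((qubitEns θ y) * (M z)).trace.re with hpdef
        have hpnn : ∀ y, 0 ≤ p y := fun y => trace_mul_psd_nonneg (hEpsd y) (hM.1 z)
        obtain ⟨y1, -, hy1⟩ := Finset.exists_max_image (Finset.univ : Finset (Fin 4)) p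
          ⟨0, Finset.mem_univ 0⟩
        obtain ⟨w0, hw0⟩ := exists_ne y1
        obtain ⟨y2, hy2mem, hy2⟩ := Finset.exists_max_image
          ((Finset.univ : Finset (Fin 4)).erase y1) p
          ⟨w0, Finset.mem_erase.2 ⟨hw0, Finset.mem_univ w0⟩⟩
        have hne : y1 ≠ y2 := (Finset.mem_erase.1 hy2mem).1.symm
        have step1 : ∀ t : Fin 4, (∑ x : Fin 4, αex t x * ν t x z * p x)
            ≤ 3⁻¹ * p (if t = y1 then y2 else y1) := by
          intro t
          have hw : ∀ x : Fin 4, αex t x * p x ≤ 3⁻¹ * p (if t = y1 then y2 else y1) := by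
            intro x
            by_cases hxt : x = t
            · subst hxt
              have : αex x x = 0 := by simp [αex]
              rw [this, zero_mul]
              exact mul_nonneg (by norm_num) (hpnn _)
            · have hα : αex t x = 3⁻¹ := by
                simp [αex, hxt]
              rw [hα]
              refine mul_le_mul_of_nonneg_left ?_ (by norm_num)
              split_ifs with h1
              · exact hy2 x (Finset.mem_erase.2 ⟨h1 ▸ hxt, Finset.mem_univ x⟩)
              · exact hy1 x (Finset.mem_univ x)
          calc (∑ x : Fin 4, αex t x * ν t x z * p x)
              = ∑ x : Fin 4, ν t x z * (αex t x * p x) :=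
                Finset.sum_congr rfl fun x _ => by ring
            _ ≤ ∑ x : Fin 4, ν t x z * (3⁻¹ * p (if t = y1 then y2 else y1)) :=
                Finset.sum_le_sum fun x _ =>
                  mul_le_mul_of_nonneg_left (hw x) (hν.1 t x z)
            _ = (∑ x : Fin 4, ν t x z) * (3⁻¹ * p (if t = y1 then y2 else y1)) := by
                rw [← Finset.sum_mul]
            _ = 3⁻¹ * p (if t = y1 then y2 else y1) := by rw [hν.2 t z, one_mul]
        have step2 : (∑ t : Fin 4, 3⁻¹ * p (if t = y1 then y2 else y1))
            = p y1 + 3⁻¹ * p y2 := by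
          have he : ∀ t : Fin 4, 3⁻¹ * p (if t = y1 then y2 else y1)
              = 3⁻¹ * p y1 + (if t = y1 then 3⁻¹ * p y2 - 3⁻¹ * p y1 else 0) := by
            intro t; split_ifs <;> ring
          rw [Finset.sum_congr rfl fun t _ => he t, Finset.sum_add_distrib,
            Finset.sum_ite_eq' Finset.univ y1 (fun _ => 3⁻¹ * p y2 - 3⁻¹ * p y1)]
          simp
          ring
        have step3 : p y1 + 3⁻¹ * p y2 ≤ (4+S)/24 * (M z).trace.re := by
          have h := trace_le_of_psd (hM.1 z) (hpair y1 y2 hne)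
          rw [Matrix.add_mul, Matrix.trace_add, Complex.add_re] at h
          rw [trace_rsmul_mul_re] at h
          rw [trace_rsmul_mul_re, Matrix.one_mul] at h
          exact h
        calc (∑ t : Fin 4, ∑ x : Fin 4, αex t x * ν t x z * p x)
            ≤ ∑ t : Fin 4, 3⁻¹ * p (if t = y1 then y2 else y1) :=
              Finset.sum_le_sum fun t _ => step1 t
          _ = p y1 + 3⁻¹ * p y2 := step2
          _ ≤ (4+S)/24 * (M z).trace.re := step3
      have hμ : (∑ z, (M z).trace.re) = 2 := by
        have : (∑ z, (M z).trace) = 2 := by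
          rw [← Matrix.trace_sum, hM.2]
          simp [Matrix.trace_one]
        calc (∑ z, (M z).trace.re) = (∑ z, (M z).trace).re := by rw [Complex.re_sum]
          _ = 2 := by rw [this]; norm_num
      rw [hrw]
      calc (∑ z, ∑ t : Fin 4, ∑ x : Fin 4,
            αex t x * ν t x z * ((qubitEns θ x) * (M z)).trace.re)
          ≤ ∑ z, (4+S)/24 * (M z).trace.re := Finset.sum_le_sum fun z _ => hz z
        _ = (4+S)/24 * (∑ z, (M z).trace.re) := by rw [← Finset.mul_sum]
        _ = (1/12) * (4 + S) := by rw [hμ]; ring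
    have hmem : (1/12) * (4 + S) ∈ {p : ℝ | ∃ (n : ℕ) (M : Fin n → Mat 2)
        (ν : Fin 4 → Fin 4 → Fin n → ℝ),
        IsMeasurement M ∧ IsPostProc ν ∧ p = Epost fdisc αex (qubitEns θ) M ν} := by
      have hS2' : S*S = 12*Real.cos (θ/2)^2 + 4 := by nlinarith [hS2, hcosθ]
      have hunorm : (![4*Real.cos (θ/2)/S, 2*Real.sin (θ/2)/S, (0:ℝ)]) 0 ^ 2
          + (![4*Real.cos (θ/2)/S, 2*Real.sin (θ/2)/S, (0:ℝ)]) 1 ^ 2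
          + (![4*Real.cos (θ/2)/S, 2*Real.sin (θ/2)/S, (0:ℝ)]) 2 ^ 2 ≤ 1 := by
        simp [Matrix.vecHead, Matrix.vecTail]
        rw [div_pow, div_pow, ← add_div, div_le_one (by positivity)]
        nlinarith [hcs, hS2']
      refine ⟨2,
        (fun z : Fin 2 => if z = 0 then blochP (![4*Real.cos (θ/2)/S, 2*Real.sin (θ/2)/S, 0])
          else blochP (-![4*Real.cos (θ/2)/S, 2*Real.sin (θ/2)/S, 0])),
        (fun t y z => if z = 0 then (if y = (if t = 0 then (2:Fin 4) else 0) then 1 else 0)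
          else (if y = (if t = 1 then (3:Fin 4) else 1) then 1 else 0)), ?_, ?_, ?_⟩
      · constructor
        · intro z
          dsimp only
          split_ifs
          · exact blochP_psd _ hunorm
          · refine blochP_psd _ ?_
            simpa [Pi.neg_apply] using hunorm
        · rw [Fin.sum_univ_two, if_pos rfl, if_neg (by decide)]
          exact blochP_add_neg _
      · constructor
        · intro t y z
          dsimp only
          split_ifs <;> norm_num
        · intro t z
          fin_cases t <;> fin_cases z <;>
            simp (config := { decide := true }) [Fin.sum_univ_four]
      · have htr2 : ∀ (x : Fin 4) (w : Fin 3 → ℝ), ((qubitEns θ x) * blochP w).trace.re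
            = 16⁻¹ * (2 + 2*(labelVec θ x 0 * w 0 + labelVec θ x 1 * w 1
              + labelVec θ x 2 * w 2)) := by
          intro x w
          rw [qubitEns_def, blochP, trace_rbloch_mul_re]
          norm_num
        simp only [Epost, Fin.sum_univ_four, Fin.sum_univ_two, fdisc, αex]
        simp (config := { decide := true }) only [ite_true, ite_false, reduceIte]
        simp only [htr2, labelVec, Matrix.cons_val_zero, Matrix.cons_val_one,
          Matrix.head_cons, Matrix.vecHead, Matrix.vecTail, Pi.neg_apply,
          Matrix.cons_val_two, Matrix.tail_cons, Function.comp_apply, Matrix.cons_val_succ, Matrix.cons_val_three]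
        field_simp
        ring_nf
        ring_nf at hS2' hcs
        nlinarith [hS2', hcs]
    exact le_antisymm (csSup_le ⟨_, hmem⟩ hub) (le_csSup ⟨_, hub⟩ hmem)
end
end
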